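/- Let T be a bounded operator on a Hilbert space H, k ≥ 1, and x₀ ∈ H. For a polynomial p = ∑ pₙzⁿ define Lp = ∑_{n≥1} pₙ z^{n-1} and the norm ‖|p‖|²_k = ∑ₙ|pₙ|² + ∑_{n≥0} ‖(L^{nk}p)(T)x₀‖². Then for every polynomial p and every j ∈ ℕ, ‖|z^{kj}p‖|²_k = ‖|p‖|²_k + ∑_{i=1}^{j} ‖T^{ki}p(T)x₀‖². -/

import Mathlib

open scoped BigOperators
open Polynomial

/-- The squared norm `‖|p‖|²_k = ∑ₙ |pₙ|² + ∑_{n≥0} ‖(L^{nk} p)(T) x₀‖²`, where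
`L` is the coefficient backward shift `Lp(z) = (p(z) - p(0))/z` (i.e. `Polynomial.divX`).
All series have only finitely many nonzero terms, so we use `tsum`. -/
noncomputable def polyNormSq {H : Type*} [NormedAddCommGroup H] [InnerProductSpace ℂ H]
    [CompleteSpace H] (k : ℕ) (T : H →L[ℂ] H) (x₀ : H) (p : Polynomial ℂ) : ℝ :=
  (∑' n : ℕ, ‖p.coeff n‖ ^ 2) +
    ∑' n : ℕ, ‖(Polynomial.aeval T (Polynomial.divX^[n * k] p)) x₀‖ ^ 2

private lemma divX_X_mul (q : Polynomial ℂ) : (Polynomial.X * q).divX = q := by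
  ext n
  simp [Polynomial.coeff_divX, Polynomial.coeff_X_mul]

private lemma iterate_divX_X_pow_mul (b : ℕ) (p : Polynomial ℂ) :
    Polynomial.divX^[b] (Polynomial.X ^ b * p) = p := by
  induction b with
  | zero => simp
  | succ b ih =>
    have h : Polynomial.X ^ (b + 1) * p = Polynomial.X * (Polynomial.X ^ b * p) := by ring
    rw [h, Function.iterate_succ_apply, divX_X_mul, ih]

private lemma coeff_iterate_divX (m n : ℕ) (p : Polynomial ℂ) :
    (Polynomial.divX^[m] p).coeff n = p.coeff (n + m) := by
  induction m generalizing n p with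
  | zero => simp
  | succ m ih =>
    rw [Function.iterate_succ_apply, ih, Polynomial.coeff_divX]
    ring_nf

private lemma iterate_divX_eq_zero {m : ℕ} {p : Polynomial ℂ} (h : p.natDegree < m) :
    Polynomial.divX^[m] p = 0 := by
  ext n
  rw [coeff_iterate_divX]
  exact Polynomial.coeff_eq_zero_of_natDegree_lt (by omega)

private lemma aeval_X_pow_mul {H : Type*} [NormedAddCommGroup H] [InnerProductSpace ℂ H]
    [CompleteSpace H] (T : H →L[ℂ] H) (x₀ : H) (m : ℕ) (p : Polynomial ℂ) :
    (Polynomial.aeval T (Polynomial.X ^ m * p)) x₀ = (T ^ m) ((Polynomial.aeval T p) x₀) := by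
  rw [map_mul, Polynomial.aeval_X_pow]
  rfl

theorem stmt18 {H : Type*} [NormedAddCommGroup H] [InnerProductSpace ℂ H] [CompleteSpace H]
    (k : ℕ) (hk : 1 ≤ k) (T : H →L[ℂ] H) (x₀ : H) (p : Polynomial ℂ) (j : ℕ) :
    polyNormSq k T x₀ (Polynomial.X ^ (k * j) * p) =
      polyNormSq k T x₀ p +
        ∑ i ∈ Finset.Icc 1 j, ‖(T ^ (k * i)) ((Polynomial.aeval T p) x₀)‖ ^ 2 := by
  unfold polyNormSq
  set q := Polynomial.X ^ (k * j) * p with hq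
  -- first sums equal
  have h1 : (∑' n : ℕ, ‖q.coeff n‖ ^ 2) = ∑' n : ℕ, ‖p.coeff n‖ ^ 2 := by
    have hinj : Function.Injective (fun n : ℕ => n + k * j) := fun a b h => by simpa using h
    have h2 := hinj.tsum_eq (f := fun n : ℕ => ‖q.coeff n‖ ^ 2) ?_
    · rw [← h2]
      congr 1
      funext n
      simp [hq, Polynomial.coeff_X_pow_mul]
    · intro x hx
      simp only [Function.mem_support] at hx
      by_contra hmem
      have hxlt : x < k * j := by
        by_contra hge
        exact hmem ⟨x - k * j, by show x - k * j + k * j = x; omega⟩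
      apply hx
      show ‖q.coeff x‖ ^ 2 = 0
      have hz : q.coeff x = 0 := by
        rw [hq, mul_comm, Polynomial.coeff_mul_X_pow']
        simp [Nat.not_le.mpr hxlt]
      rw [hz]
      simp
  rw [h1]
  -- second sums
  have hg : Summable (fun n : ℕ => ‖(Polynomial.aeval T (Polynomial.divX^[n * k] q)) x₀‖ ^ 2) := by
    apply summable_of_ne_finset_zero (s := Finset.range (q.natDegree + 1))
    intro n hn
    have : q.natDegree < n * k := by
      simp only [Finset.mem_range] at hn
      nlinarith
    rw [iterate_divX_eq_zero this]
    simp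
  have key : ∀ n : ℕ, Polynomial.divX^[(n + j) * k] q = Polynomial.divX^[n * k] p := by
    intro n
    have h3 : (n + j) * k = n * k + j * k := by ring
    rw [h3, Function.iterate_add_apply]
    congr 1
    rw [hq, mul_comm k j]
    exact iterate_divX_X_pow_mul (j * k) p
  have hsplit := Summable.sum_add_tsum_nat_add j hg
  rw [← hsplit]
  have htail : (∑' n : ℕ, ‖(Polynomial.aeval T (Polynomial.divX^[(n + j) * k] q)) x₀‖ ^ 2)
      = ∑' n : ℕ, ‖(Polynomial.aeval T (Polynomial.divX^[n * k] p)) x₀‖ ^ 2 := by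
    congr 1
    funext n
    rw [key]
  have hhead : (∑ n ∈ Finset.range j, ‖(Polynomial.aeval T (Polynomial.divX^[n * k] q)) x₀‖ ^ 2)
      = ∑ i ∈ Finset.Icc 1 j, ‖(T ^ (k * i)) ((Polynomial.aeval T p) x₀)‖ ^ 2 := by
    have hterm : ∀ n ∈ Finset.range j,
        ‖(Polynomial.aeval T (Polynomial.divX^[n * k] q)) x₀‖ ^ 2
          = ‖(T ^ (k * (j - n))) ((Polynomial.aeval T p) x₀)‖ ^ 2 := by
      intro n hn
      simp only [Finset.mem_range] at hn
      have hsplit2 : q = Polynomial.X ^ (n * k) * (Polynomial.X ^ (k * (j - n)) * p) := by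
        rw [hq, ← mul_assoc, ← pow_add]
        congr 2
        obtain ⟨c, rfl⟩ : ∃ c, j = n + c := ⟨j - n, by omega⟩
        have h5 : n + c - n = c := by omega
        rw [h5]
        ring
      rw [hsplit2, iterate_divX_X_pow_mul, aeval_X_pow_mul]
    rw [Finset.sum_congr rfl hterm]
    rw [← Finset.Ico_add_one_right_eq_Icc, Finset.sum_Ico_eq_sum_range]
    have h6 : j + 1 - 1 = j := by omega
    rw [h6, ← Finset.sum_range_reflect]
    apply Finset.sum_congr rfl
    intro n hn
    simp only [Finset.mem_range] at hn
    have h7 : j - (j - 1 - n) = 1 + n := by omega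
    rw [h7]
  rw [htail, hhead]
  ring
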